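/- Let p(x) = Σ_{j≥0} a_j x^j be a power series over Q_p(ζ) with a_j p^{j(1−ε)} → 0 for some ε > 0 (i.e. convergent on a disk of radius > |p|). Define b_l := Σ_{k≥0} (a_{l+k−1} (pM)^{k−1} / (l+k)) C(l+k, k) (−1)^k B_k for l ≥ 1, where B_k are Bernoulli numbers. Then b_l p^{l(1−ε/2)} → 0; in particular q(x) := Σ_{l≥1} b_l x^l converges on a disk of radius strictly greater than |p|. -/

import Mathlib

open Filter Topology Finset

section aux

variable {p : ℕ} {K : Type*} [NormedField K] [CharZero K]

lemma aux_unit (hp : p.Prime) (hna : IsNonarchimedean (norm : K → ℝ))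
    (hpK : ‖(p : K)‖ = (p : ℝ)⁻¹) (m : ℕ) (hm : ¬ p ∣ m) : ‖(m : K)‖ = 1 := by
  haveI : IsUltrametricDist K :=
    IsUltrametricDist.isUltrametricDist_of_isNonarchimedean_norm hna
  have h1 : ‖(m : K)‖ ≤ 1 := IsUltrametricDist.norm_natCast_le_one K m
  refine le_antisymm h1 ?_
  by_contra hlt
  push_neg at hlt
  have hcop : Nat.Coprime p m := (Nat.Prime.coprime_iff_not_dvd hp).mpr hm
  have : IsCoprime (p : ℤ) (m : ℤ) := Nat.isCoprime_iff_coprime.mpr hcop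
  obtain ⟨u, v, huv⟩ := this
  have hcast : ((u * p + v * m : ℤ) : K) = 1 := by rw [huv]; norm_cast
  have h2 : (1 : ℝ) ≤ max (‖(u : K)‖ * ‖(p : K)‖) (‖(v : K)‖ * ‖(m : K)‖) := by
    calc (1 : ℝ) = ‖((u * p + v * m : ℤ) : K)‖ := by rw [hcast, norm_one]
    _ ≤ max ‖((u * p : ℤ) : K)‖ ‖((v * m : ℤ) : K)‖ := by
        push_cast
        exact hna _ _
    _ = max (‖(u : K)‖ * ‖(p : K)‖) (‖(v : K)‖ * ‖(m : K)‖) := by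
        push_cast
        rw [norm_mul, norm_mul]
  have hu : ‖(u : K)‖ ≤ 1 := IsUltrametricDist.norm_intCast_le_one K u
  have hv : ‖(v : K)‖ ≤ 1 := IsUltrametricDist.norm_intCast_le_one K v
  have hp1 : (1 : ℝ) < p := by exact_mod_cast hp.one_lt
  have hp0 : (0 : ℝ) < p := by positivity
  have hA : ‖(u : K)‖ * ‖(p : K)‖ < 1 := by
    rw [hpK]
    calc ‖(u : K)‖ * (p : ℝ)⁻¹ ≤ 1 * (p : ℝ)⁻¹ := by
          apply mul_le_mul_of_nonneg_right hu; positivity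
    _ < 1 := by rw [one_mul]; exact inv_lt_one_of_one_lt₀ hp1
  have hB : ‖(v : K)‖ * ‖(m : K)‖ < 1 := by
    calc ‖(v : K)‖ * ‖(m : K)‖ ≤ 1 * ‖(m : K)‖ := by
          apply mul_le_mul_of_nonneg_right hv (norm_nonneg _)
    _ < 1 := by rw [one_mul]; exact hlt
  exact absurd h2 (not_le.mpr (max_lt hA hB))

lemma aux_norm_nat (hp : p.Prime) (hna : IsNonarchimedean (norm : K → ℝ))
    (hpK : ‖(p : K)‖ = (p : ℝ)⁻¹) (n : ℕ) (hn : 0 < n) :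
    ∃ v : ℕ, p ^ v ≤ n ∧ ‖(n : K)‖ = ((p : ℝ) ^ v)⁻¹ := by
  set v := n.factorization p with hv
  have hdvd : p ^ v ∣ n := Nat.ordProj_dvd n p
  refine ⟨v, Nat.le_of_dvd hn hdvd, ?_⟩
  have hm : ¬ p ∣ n / p ^ v := Nat.not_dvd_ordCompl hp hn.ne'
  have hne : n = p ^ v * (n / p ^ v) := (Nat.mul_div_cancel' hdvd).symm
  calc ‖(n : K)‖ = ‖((p : K)) ^ v * ((n / p ^ v : ℕ) : K)‖ := by
        conv_lhs => rw [hne]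
        push_cast
        ring_nf
  _ = ‖(p : K)‖ ^ v * ‖((n / p ^ v : ℕ) : K)‖ := by rw [norm_mul, norm_pow]
  _ = ((p : ℝ) ^ v)⁻¹ := by
        rw [aux_unit hp hna hpK _ hm, hpK, mul_one, inv_pow]

end aux

-- identity: (m+1) * C(m,i) = (m+1-i) * C(m+1,i) for i ≤ m
lemma aux_choose_id (m i : ℕ) (h : i ≤ m) :
    (m + 1) * m.choose i = (m + 1 - i) * (m + 1).choose i := by
  have h1 := Nat.add_one_mul_choose_eq m (m - i)
  rw [Nat.choose_symm h] at h1
  rw [show m - i + 1 = m + 1 - i by omega,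
    Nat.choose_symm (show i ≤ m + 1 by omega)] at h1
  rw [h1, Nat.mul_comm]

lemma aux_bern {p : ℕ} {K : Type*} [NormedField K] [CharZero K]
    (hp : p.Prime) (hna : IsNonarchimedean (norm : K → ℝ))
    (hpK : ‖(p : K)‖ = (p : ℝ)⁻¹) (m : ℕ) :
    ‖((bernoulli m : ℚ) : K)‖ ≤ (p : ℝ) := by
  haveI : IsUltrametricDist K :=
    IsUltrametricDist.isUltrametricDist_of_isNonarchimedean_norm hna
  have hp1 : (1 : ℝ) < p := by exact_mod_cast hp.one_lt
  have hp0 : (0 : ℝ) < p := by positivity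
  induction m using Nat.strong_induction_on with
  | _ m ih =>
    -- Faulhaber with n = p
    have hF := sum_range_pow p m
    rw [Finset.sum_range_succ] at hF
    have hm1 : ((m : ℚ) + 1) ≠ 0 := by positivity
    have hlast : bernoulli m * ((m + 1).choose m : ℚ) * (p : ℚ) ^ (m + 1 - m) / (m + 1)
        = bernoulli m * (p : ℚ) := by
      rw [Nat.choose_succ_self_right]
      have : m + 1 - m = 1 := by omega
      rw [this]
      push_cast
      field_simp
    rw [hlast] at hF
    have key : bernoulli m * (p : ℚ) = (∑ k ∈ Finset.range p, (k : ℚ) ^ m)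
        - ∑ i ∈ Finset.range m,
            bernoulli i * ((m + 1).choose i : ℚ) * (p : ℚ) ^ (m + 1 - i) / (m + 1) := by
      linear_combination -hF
    -- cast to K
    have keyK : ((bernoulli m : ℚ) : K) * (p : K)
        = ((∑ k ∈ Finset.range p, (k : ℕ) ^ m : ℕ) : K)
          - ∑ i ∈ Finset.range m,
            ((bernoulli i : ℚ) : K) * ((m + 1).choose i : K) * (p : K) ^ (m + 1 - i)
              / ((m : K) + 1) := by
      have := congrArg (fun x : ℚ => (x : K)) key
      push_cast at this ⊢
      convert this using 2
    -- bound the norm of each summand in the range-m sum by 1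
    have hterm : ∀ i ∈ Finset.range m,
        ‖((bernoulli i : ℚ) : K) * ((m + 1).choose i : K) * (p : K) ^ (m + 1 - i)
          / ((m : K) + 1)‖ ≤ 1 := by
      intro i hi
      rw [Finset.mem_range] at hi
      set j := m + 1 - i with hj
      have hj2 : 2 ≤ j := by omega
      -- rewrite the term using the choose identity
      have hrw : ((bernoulli i : ℚ) : K) * ((m + 1).choose i : K) * (p : K) ^ (m + 1 - i)
            / ((m : K) + 1)
          = ((bernoulli i : ℚ) : K) * (m.choose i : K) * (p : K) ^ j / (j : K) := by
        have hcid := aux_choose_id m i (le_of_lt hi)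
        have hm1K : ((m : K) + 1) ≠ 0 := by
          have : ((m + 1 : ℕ) : K) ≠ 0 := Nat.cast_ne_zero.mpr (by omega)
          push_cast at this; exact this
        have hjK : (j : K) ≠ 0 := Nat.cast_ne_zero.mpr (by omega)
        field_simp
        have : ((m : K) + 1) * (m.choose i : K) = (j : K) * ((m + 1).choose i : K) := by
          have := congrArg (fun x : ℕ => (x : K)) hcid
          push_cast at this
          linear_combination this
        linear_combination (-((bernoulli i : ℚ) : K)) * (p : K) ^ (m + 1 - i) * this
      rw [hrw]
      -- norms
      obtain ⟨v, hvle, hvnorm⟩ := aux_norm_nat hp hna hpK j (by omega)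
      have hvj : v < j := by
        have : v < p ^ v := Nat.lt_pow_self (n := v) hp.one_lt
        omega
      have hjinv : ‖((j : K))⁻¹‖ ≤ (p : ℝ) ^ (j - 1) := by
        rw [norm_inv, hvnorm, inv_inv]
        exact pow_le_pow_right₀ (le_of_lt hp1) (by omega)
      have hbi : ‖((bernoulli i : ℚ) : K)‖ ≤ (p : ℝ) := ih i hi
      have hch : ‖(m.choose i : K)‖ ≤ 1 := IsUltrametricDist.norm_natCast_le_one K _
      have hpj : ‖(p : K) ^ j‖ = ((p : ℝ) ^ j)⁻¹ := by rw [norm_pow, hpK, inv_pow]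
      rw [div_eq_mul_inv, norm_mul, norm_mul, norm_mul, hpj]
      calc ‖((bernoulli i : ℚ) : K)‖ * ‖(m.choose i : K)‖ * ((p : ℝ) ^ j)⁻¹ * ‖((j:K))⁻¹‖
          ≤ (p : ℝ) * 1 * ((p : ℝ) ^ j)⁻¹ * (p : ℝ) ^ (j - 1) := by
            gcongr <;> positivity
        _ = 1 := by
            rw [mul_one]
            rw [show (p:ℝ) * ((p:ℝ)^j)⁻¹ * (p:ℝ)^(j-1) = (p:ℝ)^(1 + (j-1)) / (p:ℝ)^j by
              rw [pow_add, pow_one]; ring]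
            rw [show 1 + (j - 1) = j by omega]
            field_simp
      done
    -- now combine
    have hsum : ‖∑ i ∈ Finset.range m,
        ((bernoulli i : ℚ) : K) * ((m + 1).choose i : K) * (p : K) ^ (m + 1 - i)
          / ((m : K) + 1)‖ ≤ 1 :=
      IsUltrametricDist.norm_sum_le_of_forall_le_of_nonneg zero_le_one hterm
    have hS : ‖((∑ k ∈ Finset.range p, (k : ℕ) ^ m : ℕ) : K)‖ ≤ 1 :=
      IsUltrametricDist.norm_natCast_le_one K _
    have hmain : ‖((bernoulli m : ℚ) : K) * (p : K)‖ ≤ 1 := by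
      rw [keyK, sub_eq_add_neg]
      refine le_trans (hna _ _) (max_le hS ?_)
      rw [norm_neg]; exact hsum
    rw [norm_mul, hpK] at hmain
    have h2 := mul_le_mul_of_nonneg_right hmain (le_of_lt hp0)
    rw [one_mul] at h2
    calc ‖((bernoulli m : ℚ) : K)‖ = ‖((bernoulli m : ℚ) : K)‖ * (p : ℝ)⁻¹ * p := by
          field_simp
    _ ≤ (p : ℝ) := h2
theorem stmt12 (p : ℕ) (hp : p.Prime) {K : Type*} [NormedField K] [CompleteSpace K]
    [CharZero K] (hna : IsNonarchimedean (norm : K → ℝ)) (hpK : ‖(p : K)‖ = (p : ℝ)⁻¹)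
    (M : ℕ) (hM : 0 < M) (hMp : ¬ p ∣ M)
    (ε : ℝ) (hε : 0 < ε)
    (a : ℕ → K)
    (ha : Tendsto (fun j : ℕ => ‖a j‖ * (p : ℝ) ^ (-((j : ℝ) * (1 - ε)))) atTop (𝓝 0))
    (b : ℕ → K)
    (hb : ∀ l : ℕ, 1 ≤ l →
      b l = ∑' k : ℕ,
        a (l + k - 1) * ((p : K) * (M : K)) ^ ((k : ℤ) - 1) * ((l + k : ℕ) : K)⁻¹ *
          (Nat.choose (l + k) k : K) * (-1) ^ k * ((bernoulli k : ℚ) : K)) :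
    Tendsto (fun l : ℕ => ‖b l‖ * (p : ℝ) ^ (-((l : ℝ) * (1 - ε / 2)))) atTop (𝓝 0) := by
  haveI : IsUltrametricDist K :=
    IsUltrametricDist.isUltrametricDist_of_isNonarchimedean_norm hna
  have hq1 : (1 : ℝ) < (p : ℝ) := by exact_mod_cast hp.one_lt
  have hq0 : (0 : ℝ) < (p : ℝ) := by positivity
  set q : ℝ := (p : ℝ) with hq
  -- a bound on the coefficients a
  obtain ⟨C0, hC0⟩ := ha.bddAbove_range
  set C : ℝ := max C0 1 with hCdef
  have hC0pos : (0 : ℝ) < C := lt_of_lt_of_le one_pos (le_max_right _ _)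
  have haC : ∀ j : ℕ, ‖a j‖ ≤ C * q ^ ((j : ℝ) * (1 - ε)) := by
    intro j
    have h1 : ‖a j‖ * q ^ (-((j : ℝ) * (1 - ε))) ≤ C :=
      le_trans (hC0 (Set.mem_range_self j)) (le_max_left _ _)
    have h2 : q ^ (-((j : ℝ) * (1 - ε))) * q ^ ((j : ℝ) * (1 - ε)) = 1 := by
      rw [← Real.rpow_add hq0]; simp
    calc ‖a j‖ = ‖a j‖ * (q ^ (-((j : ℝ) * (1 - ε))) * q ^ ((j : ℝ) * (1 - ε))) := by
          rw [h2, mul_one]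
    _ = ‖a j‖ * q ^ (-((j : ℝ) * (1 - ε))) * q ^ ((j : ℝ) * (1 - ε)) := by ring
    _ ≤ C * q ^ ((j : ℝ) * (1 - ε)) := by
          apply mul_le_mul_of_nonneg_right h1; positivity
  -- the constant D
  have hlog : (0 : ℝ) < Real.log q := Real.log_pos hq1
  set D : ℝ := 1 / (ε * Real.log q) with hDdef
  have hD0 : (0 : ℝ) < D := by positivity
  have hkD : ∀ k : ℕ, (k : ℝ) * q ^ (-((k : ℝ) * ε)) ≤ D := by
    intro k
    have hexp : q ^ ((k : ℝ) * ε) = Real.exp ((k : ℝ) * ε * Real.log q) := by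
      rw [Real.rpow_def_of_pos hq0]; ring_nf
    have h1 : (k : ℝ) * ε * Real.log q ≤ q ^ ((k : ℝ) * ε) := by
      rw [hexp]
      have := Real.add_one_le_exp ((k : ℝ) * ε * Real.log q)
      nlinarith [Real.exp_pos ((k : ℝ) * ε * Real.log q)]
    have hql : (0 : ℝ) < q ^ ((k : ℝ) * ε) := Real.rpow_pos_of_pos hq0 _
    rw [Real.rpow_neg hq0.le, ← div_eq_mul_inv, hDdef,
      div_le_div_iff₀ hql (by positivity)]
    nlinarith [h1]
  have hq2 : q ^ (-((0:ℝ))) = 1 := by simp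
  -- per-term bound, for l ≥ 1
  set Bd : ℕ → ℝ := fun l => C * q * q ^ ((l : ℝ) * (1 - ε)) * q ^ ε * ((l : ℝ) + D)
    with hBddef
  have hBd0 : ∀ l : ℕ, 0 ≤ Bd l := by
    intro l; rw [hBddef]; positivity
  have hbl : ∀ l : ℕ, 1 ≤ l → ‖b l‖ ≤ Bd l := by
    intro l hl
    rw [hb l hl]
    refine IsUltrametricDist.norm_tsum_le_of_forall_le_of_nonneg (hBd0 l) ?_
    intro k
    have h1lk : 1 ≤ l + k := le_trans hl (Nat.le_add_right l k)
    -- individual factors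
    have hA1 : ‖a (l + k - 1)‖ ≤ C * q ^ (((l : ℝ) + (k : ℝ) - 1) * (1 - ε)) := by
      have := haC (l + k - 1)
      have hcast : ((l + k - 1 : ℕ) : ℝ) = (l : ℝ) + (k : ℝ) - 1 := by
        rw [Nat.cast_sub h1lk]; push_cast; ring
      rwa [hcast] at this
    have hpM : ‖(p : K) * (M : K)‖ = q⁻¹ := by
      rw [norm_mul, hpK, aux_unit hp hna hpK M hMp, mul_one]
    have hA2 : ‖((p : K) * (M : K)) ^ ((k : ℤ) - 1)‖ = q ^ (-((k : ℝ) - 1)) := by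
      rw [norm_zpow, hpM]
      rw [inv_zpow, ← zpow_neg]
      rw [← Real.rpow_intCast q (-((k : ℤ) - 1))]
      push_cast
      ring_nf
    have hA3 : ‖(((l + k : ℕ) : K))⁻¹‖ ≤ ((l : ℝ) + (k : ℝ)) := by
      obtain ⟨v, hvle, hvnorm⟩ := aux_norm_nat hp hna hpK (l + k) (by omega)
      rw [norm_inv, hvnorm, inv_inv]
      calc (q : ℝ) ^ v = ((p ^ v : ℕ) : ℝ) := by push_cast; rfl
      _ ≤ ((l + k : ℕ) : ℝ) := by exact_mod_cast hvle
      _ = (l : ℝ) + (k : ℝ) := by push_cast; ring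
    have hA4 : ‖((l + k).choose k : K)‖ ≤ 1 := IsUltrametricDist.norm_natCast_le_one K _
    have hA5 : ‖((-1 : K)) ^ k‖ = 1 := by
      rw [norm_pow, norm_neg, norm_one, one_pow]
    have hA6 : ‖((bernoulli k : ℚ) : K)‖ ≤ q := aux_bern hp hna hpK k
    -- combine
    rw [norm_mul, norm_mul, norm_mul, norm_mul, norm_mul, hA2, hA5]
    calc ‖a (l + k - 1)‖ * q ^ (-((k : ℝ) - 1)) * ‖(((l + k : ℕ) : K))⁻¹‖ *
          ‖((l + k).choose k : K)‖ * 1 * ‖((bernoulli k : ℚ) : K)‖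
        ≤ (C * q ^ (((l : ℝ) + (k : ℝ) - 1) * (1 - ε))) * q ^ (-((k : ℝ) - 1)) *
          ((l : ℝ) + (k : ℝ)) * 1 * 1 * q := by
          gcongr <;> positivity
    _ = C * (q ^ (((l : ℝ) + (k : ℝ) - 1) * (1 - ε)) * q ^ (-((k : ℝ) - 1))) *
          ((l : ℝ) + (k : ℝ)) * q := by ring
    _ = C * (q ^ ((l : ℝ) * (1 - ε)) * q ^ ε * q ^ (-((k : ℝ) * ε))) *
          ((l : ℝ) + (k : ℝ)) * q := by
          rw [← Real.rpow_add hq0, show ((l : ℝ) + (k : ℝ) - 1) * (1 - ε) + -((k : ℝ) - 1)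
              = ((l : ℝ) * (1 - ε) + ε) + -((k : ℝ) * ε) by ring,
            Real.rpow_add hq0, Real.rpow_add hq0]
    _ = C * q * q ^ ((l : ℝ) * (1 - ε)) * q ^ ε *
          (((l : ℝ) + (k : ℝ)) * q ^ (-((k : ℝ) * ε))) := by ring
    _ ≤ Bd l := by
          rw [hBddef]
          have hlk : ((l : ℝ) + (k : ℝ)) * q ^ (-((k : ℝ) * ε)) ≤ (l : ℝ) + D := by
            have hle1 : q ^ (-((k : ℝ) * ε)) ≤ 1 := by
              apply Real.rpow_le_one_of_one_le_of_nonpos hq1.le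
              have : (0:ℝ) ≤ (k : ℝ) * ε := by positivity
              linarith
            have h2 := hkD k
            have h3 : (0:ℝ) ≤ q ^ (-((k : ℝ) * ε)) := by positivity
            have h4 : (l : ℝ) * q ^ (-((k : ℝ) * ε)) ≤ (l : ℝ) * 1 :=
              mul_le_mul_of_nonneg_left hle1 (Nat.cast_nonneg l)
            nlinarith
          exact mul_le_mul_of_nonneg_left hlk (by positivity)
  -- the convergent majorant
  set r : ℝ := q ^ (-(ε / 2)) with hrdef
  have hr0 : 0 < r := Real.rpow_pos_of_pos hq0 _
  have hr1 : r < 1 := Real.rpow_lt_one_of_one_lt_of_neg hq1 (by linarith)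
  set G : ℕ → ℝ := fun l => (C * q * q ^ ε) * (((l : ℝ) + D) * r ^ l) with hGdef
  have hG : Tendsto G atTop (𝓝 0) := by
    have h1 : Tendsto (fun l : ℕ => (l : ℝ) * r ^ l) atTop (𝓝 0) := by
      have := tendsto_pow_const_mul_const_pow_of_abs_lt_one 1
        (show |r| < 1 by rw [abs_of_pos hr0]; exact hr1)
      simpa using this
    have h2 : Tendsto (fun l : ℕ => D * r ^ l) atTop (𝓝 0) := by
      have := (tendsto_pow_atTop_nhds_zero_of_lt_one hr0.le hr1).const_mul D
      simpa using this
    have h3 : Tendsto (fun l : ℕ => ((l : ℝ) + D) * r ^ l) atTop (𝓝 0) := by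
      have := h1.add h2
      simp only [add_zero] at this
      convert this using 2 with l
      ring
    have := h3.const_mul (C * q * q ^ ε)
    simpa using this
  -- squeeze
  apply squeeze_zero' (Eventually.of_forall fun l => by positivity)
    (eventually_atTop.2 ⟨1, fun l hl => ?_⟩) hG
  have hb2 := hbl l hl
  calc ‖b l‖ * q ^ (-((l : ℝ) * (1 - ε / 2)))
      ≤ Bd l * q ^ (-((l : ℝ) * (1 - ε / 2))) := by
        apply mul_le_mul_of_nonneg_right hb2; positivity
  _ = G l := by
        show C * q * q ^ ((l : ℝ) * (1 - ε)) * q ^ ε * ((l : ℝ) + D) *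
            q ^ (-((l : ℝ) * (1 - ε / 2)))
          = C * q * q ^ ε * (((l : ℝ) + D) * (q ^ (-(ε / 2))) ^ l)
        rw [← Real.rpow_natCast (q ^ (-(ε / 2))) l, ← Real.rpow_mul hq0.le,
          show (-(ε / 2) * (l : ℝ)) = (l : ℝ) * (1 - ε) + -((l : ℝ) * (1 - ε / 2)) by ring,
          Real.rpow_add hq0]
        ring
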